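/- Let (V, g, J) be a 6-dimensional real inner product space with compatible complex structure J, and let Ω⁺ be a 3-form satisfying Ω⁺(X,Y,Z) = -Ω⁺(X,JY,JZ). Let h♯ be a self-adjoint endomorphism of V anticommuting with J, and define η = h♯·Ω⁺ by η(X,Y,Z) = -Ω⁺(h♯X,Y,Z) - Ω⁺(X,h♯Y,Z) - Ω⁺(X,Y,h♯Z). Then η(JX,Y,Z) + η(X,JY,Z) + η(X,Y,JZ) = η(JX,JY,JZ) for all X,Y,Z. -/
import Mathlib


open RealInnerProductSpace

section Aux

variable {V : Type} [NormedAddCommGroup V] [InnerProductSpace ℝ V]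
  (Ω : AlternatingMap ℝ V ℝ (Fin 3))

lemma aux_neg0 (a b c : V) : Ω ![-a, b, c] = -Ω ![a, b, c] := by
  have h1 : (![-a,b,c] : Fin 3 → V) = Function.update ![a,b,c] 0 (-a) := by
    ext i; fin_cases i <;> simp
  have h2 : (![a,b,c] : Fin 3 → V) = Function.update ![a,b,c] 0 a := by
    ext i; fin_cases i <;> simp
  rw [h1, show -Ω ![a,b,c] = -Ω (Function.update ![a,b,c] 0 a) by rw [← h2]]
  exact Ω.toMultilinearMap.map_update_neg _ _ _

lemma aux_neg1 (a b c : V) : Ω ![a, -b, c] = -Ω ![a, b, c] := by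
  have h1 : (![a,-b,c] : Fin 3 → V) = Function.update ![a,b,c] 1 (-b) := by
    ext i; fin_cases i <;> simp
  have h2 : (![a,b,c] : Fin 3 → V) = Function.update ![a,b,c] 1 b := by
    ext i; fin_cases i <;> simp
  rw [h1, show -Ω ![a,b,c] = -Ω (Function.update ![a,b,c] 1 b) by rw [← h2]]
  exact Ω.toMultilinearMap.map_update_neg _ _ _

lemma aux_neg2 (a b c : V) : Ω ![a, b, -c] = -Ω ![a, b, c] := by
  have h1 : (![a,b,-c] : Fin 3 → V) = Function.update ![a,b,c] 2 (-c) := by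
    ext i; fin_cases i <;> simp
  have h2 : (![a,b,c] : Fin 3 → V) = Function.update ![a,b,c] 2 c := by
    ext i; fin_cases i <;> simp
  rw [h1, show -Ω ![a,b,c] = -Ω (Function.update ![a,b,c] 2 c) by rw [← h2]]
  exact Ω.toMultilinearMap.map_update_neg _ _ _

lemma aux_swap01 (a b c : V) : Ω ![b, a, c] = -Ω ![a, b, c] := by
  have h := Ω.map_swap (![a,b,c] : Fin 3 → V) (show (0:Fin 3) ≠ 1 by decide)
  rw [show (![a,b,c] : Fin 3 → V) ∘ Equiv.swap 0 1 = ![b,a,c] by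
    ext i; fin_cases i <;> simp [Equiv.swap_apply_def]] at h
  exact h

lemma aux_swap12 (a b c : V) : Ω ![a, c, b] = -Ω ![a, b, c] := by
  have h := Ω.map_swap (![a,b,c] : Fin 3 → V) (show (1:Fin 3) ≠ 2 by decide)
  rw [show (![a,b,c] : Fin 3 → V) ∘ Equiv.swap 1 2 = ![a,c,b] by
    ext i; fin_cases i <;> simp [Equiv.swap_apply_def]] at h
  exact h

end Aux

/-- Let `Ω⁺` be a 3-form on a 6-dimensional real inner product space with
compatible complex structure `J` satisfying `Ω⁺(X,Y,Z) = -Ω⁺(X,JY,JZ)`, and `h♯` a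
self-adjoint endomorphism anticommuting with `J`.  With
`η = h♯·Ω⁺`, `(A·Ω)(X,Y,Z) = -Ω(AX,Y,Z) - Ω(X,AY,Z) - Ω(X,Y,AZ)`, one has
`η(JX,Y,Z) + η(X,JY,Z) + η(X,Y,JZ) = η(JX,JY,JZ)`. -/
theorem stmt2 {V : Type} [NormedAddCommGroup V] [InnerProductSpace ℝ V]
    (hdim : Module.finrank ℝ V = 6)
    (J : V →ₗ[ℝ] V)
    (hJ2 : ∀ x : V, J (J x) = -x)
    (hJg : ∀ x y : V, ⟪J x, J y⟫ = ⟪x, y⟫)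
    (Ω : AlternatingMap ℝ V ℝ (Fin 3))
    (hΩ : ∀ x y z : V, Ω ![x, y, z] = -Ω ![x, J y, J z])
    (hs : V →ₗ[ℝ] V)
    (hsa : ∀ x y : V, ⟪hs x, y⟫ = ⟪x, hs y⟫)
    (hanti : ∀ x : V, hs (J x) = -J (hs x))
    (η : V → V → V → ℝ)
    (hη : ∀ x y z : V,
      η x y z = -Ω ![hs x, y, z] - Ω ![x, hs y, z] - Ω ![x, y, hs z]) :
    ∀ X Y Z : V,
      η (J X) Y Z + η X (J Y) Z + η X Y (J Z) = η (J X) (J Y) (J Z) := by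
  -- the basic J-identities for Ω
  have P23 : ∀ x y z : V, Ω ![x, J y, J z] = -Ω ![x, y, z] := by
    intro x y z; have := hΩ x y z; linarith
  have P13 : ∀ x y z : V, Ω ![J x, y, J z] = -Ω ![x, y, z] := by
    intro x y z
    have h1 := aux_swap01 Ω y (J x) (J z)
    have h2 := P23 y x z
    have h3 := aux_swap01 Ω y x z
    linarith
  have P12 : ∀ x y z : V, Ω ![J x, J y, z] = -Ω ![x, y, z] := by
    intro x y z
    have h1 := aux_swap12 Ω (J x) z (J y)
    have h2 := P13 x z y
    have h3 := aux_swap12 Ω x z y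
    linarith
  -- moving a single J between slots
  have move02 : ∀ x y z : V, Ω ![J x, y, z] = Ω ![x, y, J z] := by
    intro x y z
    have h1 := P13 x y (J z)
    rw [hJ2 z, aux_neg2] at h1
    linarith
  have move12 : ∀ x y z : V, Ω ![x, J y, z] = Ω ![x, y, J z] := by
    intro x y z
    have h1 := P23 x y (J z)
    rw [hJ2 z, aux_neg2] at h1
    linarith
  have move01 : ∀ x y z : V, Ω ![J x, y, z] = Ω ![x, J y, z] := by
    intro x y z; rw [move02, ← move12]
  intro X Y Z
  simp only [hη, hanti, aux_neg0, aux_neg1, aux_neg2]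
  have e1 := move02 (hs X) Y Z
  have e2 := move02 X (hs Y) Z
  have e3 := move01 X Y (hs Z)
  have e4 := move12 (hs X) Y Z
  have e5 := move12 X (hs Y) Z
  have e6 := move12 X Y (hs Z)
  have e7 := P12 (hs X) Y (J Z)
  have e8 := P12 X (hs Y) (J Z)
  have e9 := P12 X Y (J (hs Z))
  linarith
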